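/- Let α be a finite type, let P, P̄ : α → PMF(α) be Markov transition kernels with (1/2)·Σ_{x'∈α} |P(x)(x') − P̄(x)(x')| ≤ ε for every x ∈ α and some ε ≥ 0, let ρ_0 = ρ̄_0 be a common initial probability mass function on α, and define ρ_{k+1} = ρ_k.bind P and ρ̄_{k+1} = ρ̄_k.bind P̄. Let r : α → ℝ satisfy |r(x)| ≤ r_max for all x and some r_max ≥ 0, let 0 ≤ γ < 1, and let K ≥ 1 be an integer. Then the difference of the K-step discounted expected rewards satisfies |Σ_{i=1}^{K} γ^i·(Σ_x ρ_i(x)·r(x) − Σ_x ρ̄_i(x)·r(x))| ≤ 2·r_max·ε·Σ_{i=1}^{K} i·γ^i. -/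
import Mathlib

private lemma pmf_sum_toReal {α : Type*} [Fintype α] (p : PMF α) :
    ∑ x, (p x).toReal = 1 := by
  have h := p.tsum_coe
  rw [tsum_fintype] at h
  rw [← ENNReal.toReal_sum (fun x _ => p.apply_ne_top x), h, ENNReal.toReal_one]

private lemma pmf_bind_toReal {α : Type*} [Fintype α] (p : PMF α) (f : α → PMF α) (x : α) :
    ((p.bind f) x).toReal = ∑ y, (p y).toReal * ((f y) x).toReal := by
  rw [PMF.bind_apply, tsum_fintype,
    ENNReal.toReal_sum (fun y _ => ENNReal.mul_ne_top (p.apply_ne_top y) ((f y).apply_ne_top x))]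
  simp [ENNReal.toReal_mul]

/-- Bound on the cumulative-reward part of the performance gap: with per-step
dynamics mismatch at most `ε` in total variation, common initial distribution,
reward bounded by `r_max` and discount `γ ∈ [0,1)`, the difference of `K`-step
discounted expected rewards is at most `2 r_max ε ∑_{i=1}^K i γ^i`. -/
theorem discounted_reward_gap_le
    {α : Type*} [Fintype α] (P P' : α → PMF α) (ε : ℝ) (hε : 0 ≤ ε)
    (hTV : ∀ x, (1 / 2) * ∑ x', |((P x) x').toReal - ((P' x) x').toReal| ≤ ε)
    (ρ₀ : PMF α) (ρ ρ' : ℕ → PMF α)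
    (h0 : ρ 0 = ρ₀) (h0' : ρ' 0 = ρ₀)
    (hrec : ∀ k, ρ (k + 1) = (ρ k).bind P)
    (hrec' : ∀ k, ρ' (k + 1) = (ρ' k).bind P')
    (r : α → ℝ) (rmax : ℝ) (hrmax : 0 ≤ rmax) (hr : ∀ x, |r x| ≤ rmax)
    (γ : ℝ) (hγ0 : 0 ≤ γ) (hγ1 : γ < 1) (K : ℕ) (hK : 1 ≤ K) :
    |∑ i ∈ Finset.Icc 1 K,
        γ ^ i * ((∑ x, (ρ i x).toReal * r x) - ∑ x, (ρ' i x).toReal * r x)| ≤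
      2 * rmax * ε * ∑ i ∈ Finset.Icc 1 K, (i : ℝ) * γ ^ i := by
  -- total variation style distance
  set d : ℕ → ℝ := fun i => ∑ x, |(ρ i x).toReal - (ρ' i x).toReal| with hd
  have hTV' : ∀ x, ∑ x', |((P x) x').toReal - ((P' x) x').toReal| ≤ 2 * ε := by
    intro x
    have := hTV x
    linarith
  have hdle : ∀ i, d i ≤ 2 * i * ε := by
    intro i
    induction i with
    | zero =>
      simp [hd, h0, h0']
    | succ k ih =>
      have key : d (k + 1) ≤ 2 * ε + d k := by
        simp only [hd, hrec, hrec']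
        calc ∑ x, |((ρ k).bind P x).toReal - ((ρ' k).bind P' x).toReal|
            = ∑ x, |∑ y, ((ρ k y).toReal * ((P y) x).toReal
                - (ρ' k y).toReal * ((P' y) x).toReal)| := by
              refine Finset.sum_congr rfl fun x _ => ?_
              rw [pmf_bind_toReal, pmf_bind_toReal, ← Finset.sum_sub_distrib]
          _ ≤ ∑ x, ∑ y, |(ρ k y).toReal * ((P y) x).toReal
                - (ρ' k y).toReal * ((P' y) x).toReal| := by
              exact Finset.sum_le_sum fun x _ => Finset.abs_sum_le_sum_abs _ _
          _ ≤ ∑ x, ∑ y, ((ρ k y).toReal * |((P y) x).toReal - ((P' y) x).toReal|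
                + |(ρ k y).toReal - (ρ' k y).toReal| * ((P' y) x).toReal) := by
              refine Finset.sum_le_sum fun x _ => Finset.sum_le_sum fun y _ => ?_
              have : (ρ k y).toReal * ((P y) x).toReal - (ρ' k y).toReal * ((P' y) x).toReal
                  = (ρ k y).toReal * (((P y) x).toReal - ((P' y) x).toReal)
                    + ((ρ k y).toReal - (ρ' k y).toReal) * ((P' y) x).toReal := by ring
              rw [this]
              refine (abs_add_le _ _).trans ?_
              rw [abs_mul, abs_mul, abs_of_nonneg ENNReal.toReal_nonneg,
                abs_of_nonneg ENNReal.toReal_nonneg]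
          _ = (∑ y, (ρ k y).toReal * ∑ x, |((P y) x).toReal - ((P' y) x).toReal|)
              + ∑ y, |(ρ k y).toReal - (ρ' k y).toReal| * ∑ x, ((P' y) x).toReal := by
              rw [Finset.sum_comm]
              simp [Finset.sum_add_distrib, Finset.mul_sum]
          _ ≤ (∑ y, (ρ k y).toReal * (2 * ε)) + ∑ y, |(ρ k y).toReal - (ρ' k y).toReal| * 1 := by
              gcongr with y _ y _
              · exact hTV' y
              · exact le_of_eq (pmf_sum_toReal (P' y))
          _ = 2 * ε + d k := by
              rw [← Finset.sum_mul, pmf_sum_toReal]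
              simp [hd]
      calc d (k + 1) ≤ 2 * ε + d k := key
        _ ≤ 2 * ε + 2 * k * ε := by linarith
        _ = 2 * (k + 1 : ℕ) * ε := by push_cast; ring
  -- per-step reward gap
  have hstep : ∀ i, |(∑ x, (ρ i x).toReal * r x) - ∑ x, (ρ' i x).toReal * r x|
      ≤ 2 * rmax * (i * ε) := by
    intro i
    calc |(∑ x, (ρ i x).toReal * r x) - ∑ x, (ρ' i x).toReal * r x|
        = |∑ x, ((ρ i x).toReal - (ρ' i x).toReal) * r x| := by
          rw [← Finset.sum_sub_distrib]; congr 1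
          exact Finset.sum_congr rfl fun x _ => by ring
      _ ≤ ∑ x, |((ρ i x).toReal - (ρ' i x).toReal) * r x| :=
          Finset.abs_sum_le_sum_abs _ _
      _ ≤ ∑ x, |(ρ i x).toReal - (ρ' i x).toReal| * rmax := by
          refine Finset.sum_le_sum fun x _ => ?_
          rw [abs_mul]
          exact mul_le_mul_of_nonneg_left (hr x) (abs_nonneg _)
      _ = d i * rmax := by rw [← Finset.sum_mul]
      _ ≤ (2 * i * ε) * rmax := mul_le_mul_of_nonneg_right (hdle i) hrmax
      _ = 2 * rmax * (i * ε) := by ring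
  calc |∑ i ∈ Finset.Icc 1 K,
        γ ^ i * ((∑ x, (ρ i x).toReal * r x) - ∑ x, (ρ' i x).toReal * r x)|
      ≤ ∑ i ∈ Finset.Icc 1 K,
        |γ ^ i * ((∑ x, (ρ i x).toReal * r x) - ∑ x, (ρ' i x).toReal * r x)| :=
        Finset.abs_sum_le_sum_abs _ _
    _ ≤ ∑ i ∈ Finset.Icc 1 K, γ ^ i * (2 * rmax * (i * ε)) := by
        refine Finset.sum_le_sum fun i _ => ?_
        rw [abs_mul, abs_of_nonneg (pow_nonneg hγ0 i)]
        exact mul_le_mul_of_nonneg_left (hstep i) (pow_nonneg hγ0 i)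
    _ = 2 * rmax * ε * ∑ i ∈ Finset.Icc 1 K, (i : ℝ) * γ ^ i := by
        rw [Finset.mul_sum]
        exact Finset.sum_congr rfl fun i _ => by ring
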